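/- Let R > 0, 0 < r₀ < R, C = (r₀, 0) ∈ ℝ². Let E ∈ ℝ² with ‖E‖ + R_B ≤ R for some R_B > 0, let x := ‖E − C‖ > R_B, and suppose E − C = x·(cos ψ_E, sin ψ_E) for some ψ_E ∈ (0, π). Set χ = 2·arcsin(R_B/x), ψ₁ = ψ_E − χ/2 and ψ₂ = ψ_E + χ/2, and assume 0 < ψ₁ and ψ₂ < π. Then the set {ζ ∈ [0, 2π) : the closed segment from C to (R cos ζ, R sin ζ) intersects the closed ball of radius R_B centered at E} has one-dimensional Lebesgue measure χ + arcsin(r₀ sin ψ₁ / R) − arcsin(r₀ sin ψ₂ / R); equivalently, the corresponding boundary arc has length L₁ = R·(χ + arcsin(r₀ sin ψ₁ / R) − arcsin(r₀ sin ψ₂ / R)). -/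

import Mathlib

open MeasureTheory Real

/-- The point of the Euclidean plane with Cartesian coordinates `(a, b)`. -/
noncomputable def pt (a b : ℝ) : EuclideanSpace ℝ (Fin 2) :=
  (WithLp.equiv 2 (Fin 2 → ℝ)).symm ![a, b]

lemma pt_sub (a b c d : ℝ) : pt a b - pt c d = pt (a - c) (b - d) := by
  ext i; fin_cases i <;> simp [pt]

lemma pt_smul (r a b : ℝ) : r • pt a b = pt (r * a) (r * b) := by
  ext i; fin_cases i <;> simp [pt]

lemma pt_add (a b c d : ℝ) : pt a b + pt c d = pt (a + c) (b + d) := by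
  ext i; fin_cases i <;> simp [pt]

lemma inner_pt (a b c d : ℝ) : (inner ℝ (pt a b) (pt c d) : ℝ) = a * c + b * d := by
  simp [pt, PiLp.inner_apply, Fin.sum_univ_two]; ring

lemma norm_pt_sq (a b : ℝ) : ‖pt a b‖ ^ 2 = a ^ 2 + b ^ 2 := by
  rw [← real_inner_self_eq_norm_sq, inner_pt]; ring

lemma norm_pt (a b : ℝ) : ‖pt a b‖ = Real.sqrt (a ^ 2 + b ^ 2) := by
  rw [← norm_pt_sq, Real.sqrt_sq (norm_nonneg _)]


variable {V : Type*} [NormedAddCommGroup V] [InnerProductSpace ℝ V]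

lemma norm_comb_sq (v w : V) (t : ℝ) :
    ‖t • v - w‖ ^ 2 = t ^ 2 * ‖v‖ ^ 2 - 2 * t * (inner ℝ v w : ℝ) + ‖w‖ ^ 2 := by
  rw [norm_sub_sq_real, real_inner_smul_left, norm_smul]
  simp [mul_pow, sq_abs]; ring

lemma seg_ball_iff (R R_B : ℝ) (C P E : V) (hC : ‖C‖ < R) (hP : ‖P‖ = R)
    (hE : ‖E‖ + R_B ≤ R) (hRB : 0 < R_B) (hx : R_B < ‖E - C‖) :
    (segment ℝ C P ∩ Metric.closedBall E R_B).Nonempty ↔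
      0 ≤ (inner ℝ (P - C) (E - C) : ℝ) ∧
      (‖E - C‖ ^ 2 - R_B ^ 2) * ‖P - C‖ ^ 2 ≤ (inner ℝ (P - C) (E - C) : ℝ) ^ 2 := by
  set v := P - C with hv
  set w := E - C with hw
  set ip : ℝ := inner ℝ v w with hip
  have hvpos : 0 < ‖v‖ := by
    rw [norm_pos_iff]
    intro h
    rw [hv, sub_eq_zero] at h
    rw [h] at hP; exact hC.ne hP
  have hw2 : R_B ^ 2 < ‖w‖ ^ 2 := by nlinarith [hx, hRB]
  have key : ∀ t : ℝ, C + t • v - E = t • v - w := by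
    intro t; rw [hw]; abel
  constructor
  · rintro ⟨Q, hQs, hQb⟩
    rw [segment_eq_image'] at hQs
    obtain ⟨t, ht, rfl⟩ := hQs
    rw [Metric.mem_closedBall, dist_eq_norm, key] at hQb
    have h2 : t ^ 2 * ‖v‖ ^ 2 - 2 * t * ip + ‖w‖ ^ 2 ≤ R_B ^ 2 := by
      rw [← norm_comb_sq]; nlinarith [norm_nonneg (t • v - w), hQb, hRB]
    have htpos : 0 < t * ip := by
      nlinarith [mul_nonneg (sq_nonneg t) (sq_nonneg ‖v‖)]
    constructor
    · rcases lt_or_ge ip 0 with h | h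
      · exact absurd (mul_nonpos_of_nonneg_of_nonpos ht.1 h.le) (not_le.mpr htpos)
      · exact h
    · nlinarith [mul_le_mul_of_nonneg_right h2 (sq_nonneg ‖v‖), sq_nonneg (t * ‖v‖ ^ 2 - ip)]
  · rintro ⟨h0, hD⟩
    set t : ℝ := ip / ‖v‖ ^ 2 with htdef
    have hv2 : (0:ℝ) < ‖v‖ ^ 2 := by positivity
    have ht0 : 0 ≤ t := div_nonneg h0 hv2.le
    have hQb2 : ‖t • v - w‖ ^ 2 ≤ R_B ^ 2 := by
      rw [norm_comb_sq]
      have h1 : t ^ 2 * ‖v‖ ^ 2 - 2 * t * ip + ‖w‖ ^ 2 = ‖w‖ ^ 2 - ip ^ 2 / ‖v‖ ^ 2 := by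
        rw [htdef]; field_simp; ring
      rw [h1]
      have h2 : ‖w‖ ^ 2 - R_B ^ 2 ≤ ip ^ 2 / ‖v‖ ^ 2 := (le_div_iff₀ hv2).mpr hD
      linarith
    have hQb : C + t • v ∈ Metric.closedBall E R_B := by
      rw [Metric.mem_closedBall, dist_eq_norm, key]
      nlinarith [norm_nonneg (t • v - w), hQb2, hRB]
    have hQnorm : ‖C + t • v‖ ≤ R := by
      calc ‖C + t • v‖ = ‖(C + t • v - E) + E‖ := by rw [sub_add_cancel]
        _ ≤ ‖C + t • v - E‖ + ‖E‖ := norm_add_le _ _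
        _ ≤ R_B + ‖E‖ := by
            have := hQb; rw [Metric.mem_closedBall, dist_eq_norm] at this; linarith
        _ ≤ R := by linarith
    by_cases ht1 : t ≤ 1
    · exact ⟨C + t • v, by rw [segment_eq_image']; exact ⟨t, ⟨ht0, ht1⟩, rfl⟩, hQb⟩
    · exfalso
      push_neg at ht1
      set s : ℝ := t⁻¹ with hsdef
      have hs0 : 0 < s := by positivity
      have hs1 : s < 1 := by
        rw [hsdef, inv_lt_one_iff₀]; right; exact ht1
      have hst : s * t = 1 := inv_mul_cancel₀ (by positivity)
      have hPeq : P = (1 - s) • C + s • (C + t • v) := by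
        have h1 : (1 - s) • C + s • (C + t • v) = C + (s * t) • v := by module
        rw [h1, hst, one_smul, hv]; abel
      have hnorm : ‖P‖ ≤ (1 - s) * ‖C‖ + s * ‖C + t • v‖ := by
        rw [hPeq]
        calc ‖(1 - s) • C + s • (C + t • v)‖ ≤ ‖(1 - s) • C‖ + ‖s • (C + t • v)‖ := norm_add_le _ _
          _ = (1 - s) * ‖C‖ + s * ‖C + t • v‖ := by
              rw [norm_smul, norm_smul, Real.norm_eq_abs, Real.norm_eq_abs,
                abs_of_pos hs0, abs_of_pos (by linarith : (0:ℝ) < 1 - s)]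
      rw [hP] at hnorm
      nlinarith [hQnorm, hC, hs0, hs1]

section Fhelpers
variable {R r₀ : ℝ}

lemma u_abs_lt (hr₀ : 0 < r₀) (hR : r₀ < R) (θ : ℝ) :
    |r₀ * Real.sin θ / R| < 1 := by
  have hRpos : (0:ℝ) < R := by linarith
  rw [abs_div, abs_of_pos hRpos, div_lt_one hRpos, abs_mul, abs_of_pos hr₀]
  calc r₀ * |Real.sin θ| ≤ r₀ * 1 := mul_le_mul_of_nonneg_left (abs_sin_le_one θ) hr₀.le
    _ < R := by linarith

lemma u_mem (hr₀ : 0 < r₀) (hR : r₀ < R) (θ : ℝ) :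
    -1 ≤ r₀ * Real.sin θ / R ∧ r₀ * Real.sin θ / R ≤ 1 := by
  have := abs_lt.mp (u_abs_lt hr₀ hR θ)
  exact ⟨by linarith [this.1], by linarith [this.2]⟩

lemma F_strictMono (hr₀ : 0 < r₀) (hR : r₀ < R) :
    StrictMono (fun θ : ℝ => θ - Real.arcsin (r₀ * Real.sin θ / R)) := by
  have hRpos : (0:ℝ) < R := by linarith
  apply strictMono_of_hasDerivAt_pos
    (f' := fun θ => 1 - 1 / Real.sqrt (1 - (r₀ * Real.sin θ / R) ^ 2) * (r₀ * Real.cos θ / R))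
  · intro θ
    have habs := abs_lt.mp (u_abs_lt hr₀ hR θ)
    have h1 : r₀ * Real.sin θ / R ≠ -1 := by intro h; linarith [habs.1]
    have h2 : r₀ * Real.sin θ / R ≠ 1 := by intro h; linarith [habs.2]
    have hinner : HasDerivAt (fun θ : ℝ => r₀ * Real.sin θ / R) (r₀ * Real.cos θ / R) θ := by
      simpa [mul_div_assoc, mul_comm, div_eq_mul_inv, mul_assoc] using
        ((Real.hasDerivAt_sin θ).const_mul r₀).div_const R
    have hc := (Real.hasDerivAt_arcsin h1 h2).comp θ hinner
    exact (hasDerivAt_id θ).sub hc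
  · intro θ
    set u := r₀ * Real.sin θ / R with hu
    set q := r₀ * Real.cos θ / R with hq
    have habs := abs_lt.mp (u_abs_lt hr₀ hR θ)
    have hu2 : u ^ 2 < 1 := by nlinarith [habs.1, habs.2]
    have hs : 0 < Real.sqrt (1 - u ^ 2) := Real.sqrt_pos.mpr (by linarith)
    have hs2 : Real.sqrt (1 - u ^ 2) ^ 2 = 1 - u ^ 2 := Real.sq_sqrt (by linarith)
    have hq2 : q ^ 2 + u ^ 2 = (r₀ / R) ^ 2 := by
      rw [hu, hq]
      field_simp
      linear_combination Real.sin_sq_add_cos_sq θ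
    have h3 : (r₀ / R) ^ 2 < 1 := by
      rw [div_pow, div_lt_one (by positivity)]
      nlinarith
    have hkey : q < Real.sqrt (1 - u ^ 2) := by
      nlinarith [hs, hs2, hq2, h3, sq_nonneg (Real.sqrt (1 - u ^ 2) + q)]
    rw [sub_pos, one_div, ← div_eq_inv_mul, div_lt_one hs]
    exact hkey

lemma lam_pos (hr₀ : 0 < r₀) (hR : r₀ < R) (θ : ℝ) :
    0 < R * Real.sqrt (1 - (r₀ * Real.sin θ / R) ^ 2) - r₀ * Real.cos θ := by
  have hRpos : (0:ℝ) < R := by linarith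
  set u := r₀ * Real.sin θ / R with hu
  have habs := abs_lt.mp (u_abs_lt hr₀ hR θ)
  have hu2 : u ^ 2 < 1 := by nlinarith [habs.1, habs.2]
  have hs : 0 < Real.sqrt (1 - u ^ 2) := Real.sqrt_pos.mpr (by linarith)
  have hs2 : Real.sqrt (1 - u ^ 2) ^ 2 = 1 - u ^ 2 := Real.sq_sqrt (by linarith)
  have hRs : (R * Real.sqrt (1 - u ^ 2)) ^ 2 = R ^ 2 - (r₀ * Real.sin θ) ^ 2 := by
    rw [mul_pow, hs2, hu]
    field_simp
  have h4 : (r₀ * Real.cos θ) ^ 2 < (R * Real.sqrt (1 - u ^ 2)) ^ 2 := by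
    rw [hRs]
    have hid : (r₀ * Real.cos θ) ^ 2 + (r₀ * Real.sin θ) ^ 2 = r₀ ^ 2 := by
      linear_combination r₀ ^ 2 * Real.sin_sq_add_cos_sq θ
    nlinarith [hid]
  nlinarith [h4, mul_pos hRpos hs]

lemma cosF (hr₀ : 0 < r₀) (hR : r₀ < R) (θ : ℝ) :
    R * Real.cos (θ - Real.arcsin (r₀ * Real.sin θ / R)) =
      (R * Real.sqrt (1 - (r₀ * Real.sin θ / R) ^ 2) - r₀ * Real.cos θ) * Real.cos θ + r₀ := by
  have hRpos : (0:ℝ) < R := by linarith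
  have hmem := u_mem hr₀ hR θ
  rw [Real.cos_sub, Real.sin_arcsin hmem.1 hmem.2, Real.cos_arcsin]
  field_simp
  linear_combination r₀ * Real.sin_sq_add_cos_sq θ

lemma sinF (hr₀ : 0 < r₀) (hR : r₀ < R) (θ : ℝ) :
    R * Real.sin (θ - Real.arcsin (r₀ * Real.sin θ / R)) =
      (R * Real.sqrt (1 - (r₀ * Real.sin θ / R) ^ 2) - r₀ * Real.cos θ) * Real.sin θ := by
  have hRpos : (0:ℝ) < R := by linarith
  have hmem := u_mem hr₀ hR θ
  rw [Real.sin_sub, Real.sin_arcsin hmem.1 hmem.2, Real.cos_arcsin]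
  field_simp

lemma arcsin_lt_self (hr₀ : 0 < r₀) (hR : r₀ < R) {θ : ℝ} (h0 : 0 < θ) (hπ : θ < π) :
    Real.arcsin (r₀ * Real.sin θ / R) < θ := by
  have hRpos : (0:ℝ) < R := by linarith
  rcases le_or_gt θ (π / 2) with h | h
  · have hsin : 0 < Real.sin θ := Real.sin_pos_of_pos_of_lt_pi h0 hπ
    have hlt : r₀ * Real.sin θ / R < Real.sin θ := by
      rw [div_lt_iff₀ hRpos]
      nlinarith
    calc Real.arcsin (r₀ * Real.sin θ / R) < Real.arcsin (Real.sin θ) := by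
          apply Real.strictMonoOn_arcsin
          · constructor <;> [exact (u_mem hr₀ hR θ).1; exact (u_mem hr₀ hR θ).2]
          · exact ⟨Real.neg_one_le_sin θ, Real.sin_le_one θ⟩
          · exact hlt
      _ = θ := Real.arcsin_sin (by linarith) h
  · exact lt_of_le_of_lt (Real.arcsin_le_pi_div_two _) h
end Fhelpers

set_option maxHeartbeats 1000000 in
lemma char (R r₀ R_B x ψ_E χ ψ₁ ψ₂ : ℝ)
    (hR : 0 < R) (hr₀ : 0 < r₀) (hr₀R : r₀ < R) (hRB : 0 < R_B) (hxRB : R_B < x)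
    (hψE : ψ_E ∈ Set.Ioo 0 π)
    (hχ : χ = 2 * Real.arcsin (R_B / x))
    (hψ₁ : ψ₁ = ψ_E - χ / 2) (hψ₂ : ψ₂ = ψ_E + χ / 2)
    (hψ₁pos : 0 < ψ₁) (hψ₂lt : ψ₂ < π) (ζ : ℝ) (hζ : ζ ∈ Set.Ico 0 (2 * π)) :
    (0 ≤ (R * Real.cos ζ - r₀) * (x * Real.cos ψ_E) + (R * Real.sin ζ) * (x * Real.sin ψ_E) ∧
     (x ^ 2 - R_B ^ 2) * ((R * Real.cos ζ - r₀) ^ 2 + (R * Real.sin ζ) ^ 2) ≤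
       ((R * Real.cos ζ - r₀) * (x * Real.cos ψ_E) + (R * Real.sin ζ) * (x * Real.sin ψ_E)) ^ 2)
    ↔ ζ ∈ Set.Icc (ψ₁ - Real.arcsin (r₀ * Real.sin ψ₁ / R))
        (ψ₂ - Real.arcsin (r₀ * Real.sin ψ₂ / R)) := by
  have hx0 : 0 < x := lt_trans hRB hxRB
  set F : ℝ → ℝ := fun θ => θ - Real.arcsin (r₀ * Real.sin θ / R) with hF
  have hχ2 : χ / 2 = Real.arcsin (R_B / x) := by rw [hχ]; ring
  have hsinχ2 : Real.sin (χ / 2) = R_B / x := by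
    rw [hχ2, Real.sin_arcsin (by nlinarith [div_pos hRB hx0] : (-1:ℝ) ≤ R_B / x) ((div_le_one hx0).mpr hxRB.le)]
  have hχ2pos : 0 < χ / 2 := by rw [hχ2]; exact Real.arcsin_pos.mpr (div_pos hRB hx0)
  have hχ2lt : χ / 2 < π / 2 := by
    rw [hχ2]; exact Real.arcsin_lt_pi_div_two.mpr ((div_lt_one hx0).mpr hxRB)
  have hc2pos : 0 < Real.cos (χ / 2) :=
    Real.cos_pos_of_mem_Ioo ⟨by linarith, hχ2lt⟩
  have hxR : x ^ 2 - R_B ^ 2 = x ^ 2 * Real.cos (χ / 2) ^ 2 := by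
    have h := Real.sin_sq_add_cos_sq (χ / 2)
    rw [hsinχ2] at h
    have : (R_B / x) ^ 2 = R_B ^ 2 / x ^ 2 := by ring
    field_simp at h
    nlinarith [h]
  have hψ₁le : ψ₁ ≤ ψ₂ := by rw [hψ₁, hψ₂]; linarith
  have hψ₁E : ψ₁ ≤ ψ_E := by rw [hψ₁]; linarith
  have hψ₂E : ψ_E ≤ ψ₂ := by rw [hψ₂]; linarith
  have hcontF : Continuous F := by
    apply continuous_id.sub
    exact Real.continuous_arcsin.comp (by continuity)
  constructor
  · -- cond → mem
    rintro ⟨h0, hD⟩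
    obtain ⟨nv2, hnv2⟩ : ∃ nv2, nv2 = (R * Real.cos ζ - r₀) ^ 2 + (R * Real.sin ζ) ^ 2 := ⟨_, rfl⟩
    have hid : nv2 = R ^ 2 - 2 * R * r₀ * Real.cos ζ + r₀ ^ 2 := by
      rw [hnv2]; linear_combination R ^ 2 * Real.sin_sq_add_cos_sq ζ
    have hnv2pos : 0 < nv2 := by
      have h1 := mul_le_mul_of_nonneg_left (Real.cos_le_one ζ) (by positivity : (0:ℝ) ≤ 2 * R * r₀)
      have h2 : (R - r₀) ^ 2 = R ^ 2 - 2 * (R * r₀) + r₀ ^ 2 := by ring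
      have h3 : 0 < (R - r₀) ^ 2 := pow_pos (sub_pos.mpr hr₀R) 2
      linarith [hid]
    obtain ⟨m, hmdef⟩ : ∃ m, m = Real.sqrt nv2 := ⟨_, rfl⟩
    have hmpos : 0 < m := hmdef ▸ Real.sqrt_pos.mpr hnv2pos
    have hm : m ^ 2 = nv2 := by rw [hmdef]; exact Real.sq_sqrt hnv2pos.le
    obtain ⟨a, hadef⟩ : ∃ a, a = (R * Real.cos ζ - r₀) / m := ⟨_, rfl⟩
    obtain ⟨b, hbdef⟩ : ∃ b, b = (R * Real.sin ζ) / m := ⟨_, rfl⟩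
    have hma : m * a = R * Real.cos ζ - r₀ := by
      rw [hadef, mul_comm, div_mul_cancel₀ _ hmpos.ne']
    have hmb : m * b = R * Real.sin ζ := by
      rw [hbdef, mul_comm, div_mul_cancel₀ _ hmpos.ne']
    have hab : a ^ 2 + b ^ 2 = 1 := by
      have h1 : (m * a) ^ 2 + (m * b) ^ 2 = m ^ 2 := by rw [hma, hmb, hm, hnv2]
      have h2 : m ^ 2 * (a ^ 2 + b ^ 2) = m ^ 2 * 1 := by linear_combination h1
      exact mul_left_cancel₀ (by positivity) h2
    obtain ⟨G, hGdef⟩ : ∃ G, G = a * Real.cos ψ_E + b * Real.sin ψ_E := ⟨_, rfl⟩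
    have hA : (R * Real.cos ζ - r₀) * (x * Real.cos ψ_E) + (R * Real.sin ζ) * (x * Real.sin ψ_E)
        = x * m * G := by rw [hGdef, ← hma, ← hmb]; ring
    have hG0 : 0 ≤ G := by
      refine le_of_mul_le_mul_left ?_ (mul_pos hx0 hmpos)
      rw [mul_zero, ← hA]
      exact h0
    have hG2 : Real.cos (χ / 2) ^ 2 ≤ G ^ 2 := by
      rw [hA] at hD
      have h1 : (x ^ 2 - R_B ^ 2) * nv2 = (x * m) ^ 2 * Real.cos (χ / 2) ^ 2 := by
        rw [hxR, ← hm]; ring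
      have h2 : (x * m * G) ^ 2 = (x * m) ^ 2 * G ^ 2 := by ring
      rw [← hnv2, h1, h2] at hD
      exact le_of_mul_le_mul_left hD (by positivity)
    have hGc : Real.cos (χ / 2) ≤ G := by
      have := Real.sqrt_le_sqrt hG2
      rwa [Real.sqrt_sq hc2pos.le, Real.sqrt_sq hG0] at this
    have haabs : |a| ≤ 1 := by
      have h1 : a ^ 2 ≤ 1 := by have := sq_nonneg b; linarith
      have h2 := Real.sqrt_le_sqrt h1
      rwa [Real.sqrt_sq_eq_abs, Real.sqrt_one] at h2
    have ha1 : -1 ≤ a := neg_le_of_abs_le haabs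
    have ha2 : a ≤ 1 := le_of_abs_le haabs
    obtain ⟨θ₀, hθ₀def⟩ : ∃ θ₀, θ₀ = if 0 ≤ b then Real.arccos a else -Real.arccos a := ⟨_, rfl⟩
    have hcosθ₀ : Real.cos θ₀ = a := by
      rw [hθ₀def]; split_ifs <;> simp [Real.cos_arccos ha1 ha2]
    have hsinθ₀ : Real.sin θ₀ = b := by
      rw [hθ₀def]; split_ifs with hbs
      · rw [Real.sin_arccos]
        have : 1 - a ^ 2 = b ^ 2 := by linarith
        rw [this, Real.sqrt_sq_eq_abs, abs_of_nonneg hbs]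
      · rw [Real.sin_neg, Real.sin_arccos]
        have : 1 - a ^ 2 = b ^ 2 := by linarith
        rw [this, Real.sqrt_sq_eq_abs, abs_of_neg (not_le.mp hbs)]
        ring
    have hθ₀le : θ₀ ≤ π := by
      rw [hθ₀def]; split_ifs
      · exact Real.arccos_le_pi a
      · linarith [Real.arccos_nonneg a, Real.pi_pos]
    have hθ₀gt : -π < θ₀ := by
      rw [hθ₀def]; split_ifs with hbs
      · linarith [Real.arccos_nonneg a, Real.pi_pos]
      · have hane : -1 < a := by
          rcases lt_or_eq_of_le ha1 with h | h
          · exact h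
          · exfalso
            have hb2 : b ^ 2 = 0 := by linear_combination hab + (a - 1) * h
            have : b = 0 := pow_eq_zero_iff two_ne_zero |>.mp hb2
            exact (not_le.mp hbs).ne this
        have : Real.arccos a < π := by
          rw [Real.arccos_eq_pi_div_two_sub_arcsin]
          have := Real.neg_pi_div_two_lt_arcsin.mpr hane
          linarith
        linarith
    have hGd : Real.cos (θ₀ - ψ_E) = G := by
      rw [Real.cos_sub, hcosθ₀, hsinθ₀, hGdef]
    -- show θ₀ ∈ [ψ₁, ψ₂]
    have habs_imp : ∀ d : ℝ, 0 ≤ d → d ≤ π → Real.cos (χ / 2) ≤ Real.cos d → d ≤ χ / 2 := by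
      intro d hd0 hdπ hdc
      by_contra h
      push_neg at h
      have := Real.strictAntiOn_cos ⟨by linarith, by linarith⟩ ⟨hd0, hdπ⟩ h
      linarith
    have hθin : ψ₁ ≤ θ₀ ∧ θ₀ ≤ ψ₂ := by
      rcases le_or_gt (-π) (θ₀ - ψ_E) with hd | hd
      · have hd2 : θ₀ - ψ_E ≤ π := by linarith [hψE.1]
        have hcabs : Real.cos |θ₀ - ψ_E| = Real.cos (θ₀ - ψ_E) := by
          rcases abs_choice (θ₀ - ψ_E) with h | h
          · rw [h]
          · rw [h, Real.cos_neg]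
        have habs := habs_imp |θ₀ - ψ_E| (abs_nonneg _) (abs_le.mpr ⟨hd, hd2⟩)
          (by rw [hcabs, hGd]; exact hGc)
        rw [abs_le] at habs
        exact ⟨by rw [hψ₁]; linarith [habs.1], by rw [hψ₂]; linarith [habs.2]⟩
      · exfalso
        have h1 : 0 < θ₀ - ψ_E + 2 * π := by linarith [hψE.2, Real.pi_pos]
        have h2 : θ₀ - ψ_E + 2 * π ≤ π := by linarith
        have h3 : Real.cos (θ₀ - ψ_E + 2 * π) = G := by
          rw [Real.cos_add_two_pi, hGd]
        have := habs_imp _ h1.le h2 (by rw [h3]; exact hGc)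
        have : θ₀ ≤ ψ₂ - 2 * π := by rw [hψ₂]; linarith
        linarith [Real.pi_pos]
    have hθ₀pos : 0 < θ₀ := lt_of_lt_of_le hψ₁pos hθin.1
    have hθ₀π : θ₀ < π := lt_of_le_of_lt hθin.2 hψ₂lt
    -- circle equations
    obtain ⟨lam, hlamdef⟩ : ∃ lam, lam = R * Real.sqrt (1 - (r₀ * Real.sin θ₀ / R) ^ 2) - r₀ * Real.cos θ₀ := ⟨_, rfl⟩
    have hlampos : 0 < lam := hlamdef ▸ lam_pos hr₀ hr₀R θ₀
    obtain ⟨ξ, hξdef⟩ : ∃ ξ, ξ = F θ₀ := ⟨_, rfl⟩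
    have hcosξ : R * Real.cos ξ = lam * Real.cos θ₀ + r₀ := by
      rw [hξdef, hlamdef]; exact cosF hr₀ hr₀R θ₀
    have hsinξ : R * Real.sin ξ = lam * Real.sin θ₀ := by
      rw [hξdef, hlamdef]; exact sinF hr₀ hr₀R θ₀
    have hcirc1 : (lam * a + r₀) ^ 2 + (lam * b) ^ 2 = R ^ 2 := by
      rw [← hcosθ₀, ← hsinθ₀, ← hcosξ, ← hsinξ]
      linear_combination R ^ 2 * Real.sin_sq_add_cos_sq ξ
    have hcirc0 : (m * a + r₀) ^ 2 + (m * b) ^ 2 = R ^ 2 := by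
      rw [hma, hmb]
      linear_combination R ^ 2 * Real.sin_sq_add_cos_sq ζ
    have heq : (lam - m) * (lam + m + 2 * r₀ * a) = 0 := by
      linear_combination hcirc1 - hcirc0 + (m ^ 2 - lam ^ 2) * hab
    have hmq : m * (m + 2 * r₀ * a) = R ^ 2 - r₀ ^ 2 := by
      linear_combination hcirc0 - m ^ 2 * hab
    have hfac : 0 < lam + m + 2 * r₀ * a := by
      have hr2 : r₀ ^ 2 < R ^ 2 := by
        have := pow_lt_pow_left₀ hr₀R hr₀.le (two_ne_zero)
        simpa using this
      rcases le_or_gt (m + 2 * r₀ * a) 0 with h | h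
      · exfalso
        have := mul_nonpos_of_nonneg_of_nonpos hmpos.le h
        rw [hmq] at this
        linarith
      · linarith
    have hlm : lam = m := by
      rcases mul_eq_zero.mp heq with h | h
      · linarith
      · linarith
    -- conclude cos/sin equalities
    have hcosζξ : Real.cos ζ = Real.cos ξ := by
      have : R * Real.cos ζ = R * Real.cos ξ := by rw [hcosξ, hcosθ₀, hlm]; linarith [hma]
      exact mul_left_cancel₀ hR.ne' this
    have hsinζξ : Real.sin ζ = Real.sin ξ := by
      have : R * Real.sin ζ = R * Real.sin ξ := by rw [hsinξ, hsinθ₀, hlm]; linarith [hmb]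
      exact mul_left_cancel₀ hR.ne' this
    have hξpos : 0 < ξ := by
      rw [hξdef]
      have := arcsin_lt_self hr₀ hr₀R hθ₀pos hθ₀π
      simp only [hF]
      linarith
    have hξπ : ξ < π := by
      rw [hξdef]
      simp only [hF]
      have hsθ : 0 ≤ Real.sin θ₀ := (Real.sin_pos_of_pos_of_lt_pi hθ₀pos hθ₀π).le
      have : 0 ≤ Real.arcsin (r₀ * Real.sin θ₀ / R) :=
        Real.arcsin_nonneg.mpr (by positivity)
      linarith
    have hsinζpos : 0 < Real.sin ζ := by
      rw [hsinζξ]; exact Real.sin_pos_of_pos_of_lt_pi hξpos hξπ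
    have hζπ : ζ ≤ π := by
      by_contra h
      push_neg at h
      have h1 : 0 ≤ ζ - π := by linarith
      have h2 : ζ - π ≤ π := by linarith [hζ.2]
      have := Real.sin_nonneg_of_nonneg_of_le_pi h1 h2
      rw [Real.sin_sub_pi] at this
      linarith
    have hζeq : ζ = ξ := Real.injOn_cos ⟨hζ.1, hζπ⟩ ⟨hξpos.le, hξπ.le⟩ hcosζξ
    have hmono := (F_strictMono hr₀ hr₀R).monotone
    constructor
    · have h := hmono hθin.1
      rw [hζeq, hξdef]
      exact h
    · have h := hmono hθin.2
      rw [hζeq, hξdef]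
      exact h
  · -- mem → cond
    intro hmem
    have hsub : Set.Icc (F ψ₁) (F ψ₂) ⊆ F '' Set.Icc ψ₁ ψ₂ :=
      intermediate_value_Icc hψ₁le hcontF.continuousOn
    obtain ⟨θ, hθmem, hθζ⟩ := hsub (by simpa [hF] using hmem)
    have hθ0 : 0 < θ := lt_of_lt_of_le hψ₁pos hθmem.1
    have hθπ : θ < π := lt_of_le_of_lt hθmem.2 hψ₂lt
    obtain ⟨lam, hlamdef⟩ : ∃ lam, lam = R * Real.sqrt (1 - (r₀ * Real.sin θ / R) ^ 2) - r₀ * Real.cos θ := ⟨_, rfl⟩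
    have hlampos : 0 < lam := hlamdef ▸ lam_pos hr₀ hr₀R θ
    have hcosζ : R * Real.cos ζ = lam * Real.cos θ + r₀ := by
      rw [← hθζ, hlamdef]; exact cosF hr₀ hr₀R θ
    have hsinζ : R * Real.sin ζ = lam * Real.sin θ := by
      rw [← hθζ, hlamdef]; exact sinF hr₀ hr₀R θ
    have hAeq : (R * Real.cos ζ - r₀) * (x * Real.cos ψ_E) + (R * Real.sin ζ) * (x * Real.sin ψ_E)
        = x * lam * Real.cos (θ - ψ_E) := by
      rw [Real.cos_sub]
      have h1 : R * Real.cos ζ - r₀ = lam * Real.cos θ := by linarith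
      rw [h1, hsinζ]; ring
    have habs : |θ - ψ_E| ≤ χ / 2 := by
      apply abs_le.mpr
      constructor
      · rw [hψ₁] at hθmem; linarith [hθmem.1]
      · rw [hψ₂] at hθmem; linarith [hθmem.2]
    have hcosge : Real.cos (χ / 2) ≤ Real.cos (θ - ψ_E) := by
      rw [← Real.cos_abs (θ - ψ_E)]
      exact Real.cos_le_cos_of_nonneg_of_le_pi (abs_nonneg _) (by linarith [Real.pi_pos, hχ2lt]) habs
    have hnv : (R * Real.cos ζ - r₀) ^ 2 + (R * Real.sin ζ) ^ 2 = lam ^ 2 := by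
      have h1 : R * Real.cos ζ - r₀ = lam * Real.cos θ := by linarith
      rw [h1, hsinζ]
      linear_combination lam ^ 2 * Real.sin_sq_add_cos_sq θ
    constructor
    · rw [hAeq]
      have : 0 < Real.cos (θ - ψ_E) := lt_of_lt_of_le hc2pos hcosge
      positivity
    · rw [hAeq, hnv, hxR]
      have h1 : Real.cos (χ / 2) ^ 2 ≤ Real.cos (θ - ψ_E) ^ 2 :=
        pow_le_pow_left₀ hc2pos.le hcosge 2
      calc x ^ 2 * Real.cos (χ / 2) ^ 2 * lam ^ 2
          = (x * lam) ^ 2 * Real.cos (χ / 2) ^ 2 := by ring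
        _ ≤ (x * lam) ^ 2 * Real.cos (θ - ψ_E) ^ 2 :=
            mul_le_mul_of_nonneg_left h1 (sq_nonneg _)
        _ = (x * lam * Real.cos (θ - ψ_E)) ^ 2 := by ring


/-- Shadow arc of a circular blockage seen from the user (Lemma 1, non-degenerate
case): the set of polar angles `ζ ∈ [0, 2π)` of boundary points of the disk of
radius `R` whose line-of-sight segment to the user `C = (r₀, 0)` meets the closed
blockage ball of radius `R_B` centered at `E` has one-dimensional Lebesgue measure
`χ + arcsin(r₀ sin ψ₁ / R) − arcsin(r₀ sin ψ₂ / R)`; the corresponding boundary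
arc has length `R` times this quantity. -/
theorem shadow_arc_from_user
    (R r₀ R_B : ℝ) (hR : 0 < R) (hr₀ : 0 < r₀) (hr₀R : r₀ < R) (hRB : 0 < R_B)
    (C E : EuclideanSpace ℝ (Fin 2)) (hC : C = pt r₀ 0)
    (hE : ‖E‖ + R_B ≤ R)
    (x : ℝ) (hx : x = ‖E - C‖) (hxRB : R_B < x)
    (ψ_E : ℝ) (hψE : ψ_E ∈ Set.Ioo 0 π)
    (hEC : E - C = x • pt (Real.cos ψ_E) (Real.sin ψ_E))
    (χ ψ₁ ψ₂ : ℝ) (hχ : χ = 2 * Real.arcsin (R_B / x))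
    (hψ₁ : ψ₁ = ψ_E - χ / 2) (hψ₂ : ψ₂ = ψ_E + χ / 2)
    (hψ₁pos : 0 < ψ₁) (hψ₂lt : ψ₂ < π) :
    volume {ζ ∈ Set.Ico (0 : ℝ) (2 * π) |
        (segment ℝ C (pt (R * Real.cos ζ) (R * Real.sin ζ)) ∩
          Metric.closedBall E R_B).Nonempty} =
      ENNReal.ofReal (χ + Real.arcsin (r₀ * Real.sin ψ₁ / R)
        - Real.arcsin (r₀ * Real.sin ψ₂ / R)) := by
  have hx0 : 0 < x := lt_trans hRB hxRB
  have hχnn : 0 ≤ χ := by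
    rw [hχ]
    have := Real.arcsin_nonneg.mpr (le_of_lt (div_pos hRB hx0))
    linarith
  have hCnorm : ‖C‖ = r₀ := by
    rw [hC, norm_pt]
    have : r₀ ^ 2 + (0:ℝ) ^ 2 = r₀ ^ 2 := by ring
    rw [this, Real.sqrt_sq hr₀.le]
  have hxE : R_B < ‖E - C‖ := by rw [← hx]; exact hxRB
  have hψ₂pos : 0 < ψ₂ := by rw [hψ₂]; rw [hψ₁] at hψ₁pos; linarith
  have hψ₁π : ψ₁ < π := by rw [hψ₁]; rw [hψ₂] at hψ₂lt; linarith
  set A := ψ₁ - Real.arcsin (r₀ * Real.sin ψ₁ / R) with hAdef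
  set B := ψ₂ - Real.arcsin (r₀ * Real.sin ψ₂ / R) with hBdef
  have hApos : 0 < A := by
    rw [hAdef]
    have := arcsin_lt_self hr₀ hr₀R hψ₁pos hψ₁π
    linarith
  have hseteq : {ζ ∈ Set.Ico (0 : ℝ) (2 * π) |
      (segment ℝ C (pt (R * Real.cos ζ) (R * Real.sin ζ)) ∩
        Metric.closedBall E R_B).Nonempty} = Set.Icc A B := by
    ext ζ
    simp only [Set.mem_setOf_eq, Set.mem_Ico, Set.mem_Icc]
    have hPnorm : ‖pt (R * Real.cos ζ) (R * Real.sin ζ)‖ = R := by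
      rw [norm_pt]
      have : (R * Real.cos ζ) ^ 2 + (R * Real.sin ζ) ^ 2 = R ^ 2 := by
        linear_combination R ^ 2 * Real.sin_sq_add_cos_sq ζ
      rw [this, Real.sqrt_sq hR.le]
    have hvsub : pt (R * Real.cos ζ) (R * Real.sin ζ) - C
        = pt (R * Real.cos ζ - r₀) (R * Real.sin ζ) := by
      rw [hC, pt_sub, sub_zero]
    have hEsub : E - C = pt (x * Real.cos ψ_E) (x * Real.sin ψ_E) := by
      rw [hEC, pt_smul]
    have hinner : (inner ℝ (pt (R * Real.cos ζ) (R * Real.sin ζ) - C) (E - C) : ℝ)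
        = (R * Real.cos ζ - r₀) * (x * Real.cos ψ_E)
          + (R * Real.sin ζ) * (x * Real.sin ψ_E) := by
      rw [hvsub, hEsub, inner_pt]
    have hnv : ‖pt (R * Real.cos ζ) (R * Real.sin ζ) - C‖ ^ 2
        = (R * Real.cos ζ - r₀) ^ 2 + (R * Real.sin ζ) ^ 2 := by
      rw [hvsub, norm_pt_sq]
    have hiff := seg_ball_iff R R_B C (pt (R * Real.cos ζ) (R * Real.sin ζ)) E
      (by rw [hCnorm]; exact hr₀R) hPnorm hE hRB hxE
    rw [hinner, hnv, ← hx] at hiff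
    constructor
    · rintro ⟨hIco, hseg⟩
      exact (char R r₀ R_B x ψ_E χ ψ₁ ψ₂ hR hr₀ hr₀R hRB hxRB hψE hχ hψ₁ hψ₂
        hψ₁pos hψ₂lt ζ hIco).mp (hiff.mp hseg)
    · intro hmem
      have hIco : ζ ∈ Set.Ico (0:ℝ) (2 * π) := by
        constructor
        · have hA' := hApos
          rw [hAdef] at hA'
          linarith [hmem.1]
        · have hub := hmem.2
          have hπ : 0 < π := Real.pi_pos
          rw [hBdef] at hub
          have hs : 0 ≤ Real.sin ψ₂ := (Real.sin_pos_of_pos_of_lt_pi hψ₂pos hψ₂lt).le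
          have h2 : 0 ≤ Real.arcsin (r₀ * Real.sin ψ₂ / R) :=
            Real.arcsin_nonneg.mpr (by positivity)
          linarith [hψ₂lt]
      exact ⟨hIco, hiff.mpr ((char R r₀ R_B x ψ_E χ ψ₁ ψ₂ hR hr₀ hr₀R hRB hxRB hψE hχ hψ₁ hψ₂
        hψ₁pos hψ₂lt ζ hIco).mpr hmem)⟩
  rw [hseteq, Real.volume_Icc]
  congr 1
  rw [hAdef, hBdef, hψ₁, hψ₂]
  ring
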